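/- Let F = [a, b] ⊆ R, let y_1 ∈ F, and define y_{t+1} = Π_F(y_t + δ_t) for t = 1, ..., T, where Π_F is the projection onto [a,b]. Suppose there exists i ∈ [T] such that δ_j ≤ 0 for all j ≤ i and δ_j > 0 for all j > i. Then y_{T+1} ≥ min{b, y_1 + Σ_{j=1}^T δ_j}. -/

import Mathlib

/-- One-dimensional projected iterates with nonpositive-then-positive increments satisfy
`y_{T+1} ≥ min {b, y₁ + ∑ δ_j}`, where the projection onto `[a,b]` is `x ↦ max a (min b x)`. -/
theorem stmt_2 (a b : ℝ) (hab : a ≤ b) (T : ℕ) (δ y : ℕ → ℝ)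
    (hy1 : y 1 ∈ Set.Icc a b)
    (hrec : ∀ t ∈ Finset.Icc 1 T, y (t + 1) = max a (min b (y t + δ t)))
    (i : ℕ) (hi : i ∈ Finset.Icc 1 T)
    (hneg : ∀ j ∈ Finset.Icc 1 T, j ≤ i → δ j ≤ 0)
    (hpos : ∀ j ∈ Finset.Icc 1 T, i < j → 0 < δ j) :
    y (T + 1) ≥ min b (y 1 + ∑ j ∈ Finset.Icc 1 T, δ j) := by
  simp only [Finset.mem_Icc] at hi
  obtain ⟨hi1, hiT⟩ := hi
  -- Phase 1: through the nonpositive increments, y (t+1) ≥ y 1 + partial sum, and y (t+1) ≤ b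
  have P : ∀ t, t ≤ i → y 1 + ∑ j ∈ Finset.Icc 1 t, δ j ≤ y (t + 1) ∧ y (t + 1) ≤ b := by
    intro t ht
    induction t with
    | zero => simp [hy1.2]
    | succ t ih =>
      obtain ⟨ih1, ih2⟩ := ih (Nat.le_of_succ_le ht)
      have hmem : t + 1 ∈ Finset.Icc 1 T := by
        simp [Finset.mem_Icc]; omega
      have hδ : δ (t + 1) ≤ 0 := hneg _ hmem ht
      have hrec' := hrec _ hmem
      have hle : y (t + 1) + δ (t + 1) ≤ b := by linarith
      have hsum : ∑ j ∈ Finset.Icc 1 (t + 1), δ j = (∑ j ∈ Finset.Icc 1 t, δ j) + δ (t + 1) :=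
        Finset.sum_Icc_succ_top (by omega) _
      constructor
      · rw [hrec', min_eq_right hle, hsum]
        calc y 1 + ((∑ j ∈ Finset.Icc 1 t, δ j) + δ (t + 1))
            ≤ y (t + 1) + δ (t + 1) := by linarith
          _ ≤ max a (y (t + 1) + δ (t + 1)) := le_max_right _ _
      · rw [hrec']
        exact max_le hab (le_trans (min_le_left _ _) le_rfl)
  -- Phase 2: through the positive increments
  have Q : ∀ t, i ≤ t → t ≤ T →
      min b (y (i + 1) + ∑ j ∈ Finset.Icc (i + 1) t, δ j) ≤ y (t + 1) := by
    intro t hit htT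
    induction t, hit using Nat.le_induction with
    | base => simp [min_le_right]
    | succ t hit ih =>
      have ih' := ih (by omega)
      have hmem : t + 1 ∈ Finset.Icc 1 T := by simp [Finset.mem_Icc]; omega
      have hδ : 0 < δ (t + 1) := hpos _ hmem (by omega)
      have hrec' := hrec _ hmem
      have hsum : ∑ j ∈ Finset.Icc (i + 1) (t + 1), δ j
          = (∑ j ∈ Finset.Icc (i + 1) t, δ j) + δ (t + 1) :=
        Finset.sum_Icc_succ_top (by omega) _
      set c := y (i + 1) + ∑ j ∈ Finset.Icc (i + 1) t, δ j with hc
      have h1 : min b c + δ (t + 1) ≥ min b (c + δ (t + 1)) := by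
        rcases le_total c b with h | h
        · rw [min_eq_right h]; exact min_le_right _ _
        · rw [min_eq_left h]
          exact le_trans (min_le_left _ _) (by linarith)
      have h2 : min b (c + δ (t + 1)) ≤ min b (y (t + 1) + δ (t + 1)) := by
        refine le_min (min_le_left _ _) ?_
        have := min_le_min (le_refl b) ih'
        linarith [min_le_right b c]
      rw [hrec', hsum, ← add_assoc]
      calc min b (c + δ (t + 1)) ≤ min b (y (t + 1) + δ (t + 1)) := h2
        _ ≤ max a (min b (y (t + 1) + δ (t + 1))) := le_max_right _ _
  have hQT := Q T hiT le_rfl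
  have hPi := (P i le_rfl).1
  have hsplit : ∑ j ∈ Finset.Icc 1 T, δ j
      = (∑ j ∈ Finset.Icc 1 i, δ j) + ∑ j ∈ Finset.Icc (i + 1) T, δ j := by
    rw [(show Finset.Icc 1 T = Finset.Ioc 0 T from Finset.Icc_add_one_left_eq_Ioc 0 T), (show Finset.Icc 1 i = Finset.Ioc 0 i from Finset.Icc_add_one_left_eq_Ioc 0 i), Finset.Icc_add_one_left_eq_Ioc i T]
    exact (Finset.sum_Ioc_consecutive _ (Nat.zero_le i) hiT).symm
  have : min b (y 1 + ∑ j ∈ Finset.Icc 1 T, δ j)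
      ≤ min b (y (i + 1) + ∑ j ∈ Finset.Icc (i + 1) T, δ j) := by
    apply min_le_min le_rfl
    rw [hsplit]; linarith
  exact le_trans this hQT
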